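/- Suppose there exist constants γ > 0, μ > 0, c > 0, T₀ ≥ 0 and T₁ ≥ 0 such that ∫_t^{t+γ} (f(s) − a(s)·c) ds < −μ for all t ≥ T₀ and x(t) ≥ c for all t ≥ T₁. Then limsup_{t→∞} (ln x(t))/t ≤ −μ/γ; in particular x(t) → 0 as t → ∞. (This is the exponential decay estimate (T1.6) derived in the proof of Theorem 3.3 of the paper.) -/

import Mathlib

open Filter MeasureTheory Set intervalIntegral

/-- Exponential decay estimate (T1.6) in the proof of Theorem 3.3: if
`∫_t^{t+γ} (f(s) − a(s)c) ds < −μ` for all `t ≥ T₀` and `x(t) ≥ c` for all `t ≥ T₁`,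
then `limsup (ln x(t))/t ≤ −μ/γ`, and in particular `x(t) → 0`. -/
theorem stmt_5 (f a x M : ℝ → ℝ)
    (hf_cont : ContinuousOn f (Set.Ici (0 : ℝ)))
    (ha_cont : ContinuousOn a (Set.Ici (0 : ℝ)))
    (hf_bdd : ∃ C : ℝ, ∀ t ≥ (0 : ℝ), |f t| ≤ C)
    (ha_bdd : ∃ C : ℝ, ∀ t ≥ (0 : ℝ), |a t| ≤ C)
    (ha_nonneg : ∀ s ≥ (0 : ℝ), 0 ≤ a s)
    (hx_pos : ∀ t ≥ (0 : ℝ), 0 < x t)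
    (hx_cont : ContinuousOn x (Set.Ici (0 : ℝ)))
    (hM : Filter.Tendsto (fun t => M t / t) Filter.atTop (nhds 0))
    (heq : ∀ t₁ t₂ : ℝ, 0 ≤ t₁ → t₁ ≤ t₂ →
      Real.log (x t₂) - Real.log (x t₁)
        = (∫ s in t₁..t₂, (f s - a s * x s)) + (M t₂ - M t₁))
    (γ μ c T₀ T₁ : ℝ) (hγ : 0 < γ) (hμ : 0 < μ) (hc : 0 < c)
    (hT₀ : 0 ≤ T₀) (hT₁ : 0 ≤ T₁)
    (hint : ∀ t ≥ T₀, (∫ s in t..(t + γ), (f s - a s * c)) < -μ)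
    (hxc : ∀ t ≥ T₁, c ≤ x t) :
    Filter.limsup (fun t => Real.log (x t) / t) Filter.atTop ≤ -μ / γ ∧
      Filter.Tendsto x Filter.atTop (nhds 0) := by
  obtain ⟨Cf, hCf⟩ := hf_bdd
  obtain ⟨Ca, hCa⟩ := ha_bdd
  set K : ℝ := Cf + Ca * c with hKdef
  have hK0 : 0 ≤ K := by
    have h1 := hCf 0 le_rfl
    have h2 := hCa 0 le_rfl
    have := abs_nonneg (f 0)
    have := abs_nonneg (a 0)
    nlinarith
  set T : ℝ := max T₀ T₁ with hTdef
  have hTT₀ : T₀ ≤ T := le_max_left _ _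
  have hTT₁ : T₁ ≤ T := le_max_right _ _
  have hT0 : (0 : ℝ) ≤ T := le_trans hT₀ hTT₀
  -- continuity / integrability of the comparison integrand
  have hg_cont : ContinuousOn (fun s => f s - a s * c) (Set.Ici (0:ℝ)) :=
    hf_cont.sub (ha_cont.mul continuousOn_const)
  have hsub : ∀ u v : ℝ, 0 ≤ u → 0 ≤ v → Set.uIcc u v ⊆ Set.Ici (0:ℝ) := by
    intro u v hu hv s hs
    exact le_trans (le_min hu hv) hs.1
  have hg_int : ∀ u v : ℝ, 0 ≤ u → 0 ≤ v →
      IntervalIntegrable (fun s => f s - a s * c) volume u v := by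
    intro u v hu hv
    exact (hg_cont.mono (hsub u v hu hv)).intervalIntegrable
  have hh_int : ∀ u v : ℝ, 0 ≤ u → 0 ≤ v →
      IntervalIntegrable (fun s => f s - a s * x s) volume u v := by
    intro u v hu hv
    exact ((hf_cont.sub (ha_cont.mul hx_cont)).mono (hsub u v hu hv)).intervalIntegrable
  -- pointwise bound on the integrand
  have hgK : ∀ s : ℝ, 0 ≤ s → |f s - a s * c| ≤ K := by
    intro s hs
    have h1 := hCf s hs
    have h2 := hCa s hs
    have h3 : |f s - a s * c| ≤ |f s| + |a s * c| := abs_sub _ _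
    have h4 : |a s * c| = |a s| * c := by
      rw [abs_mul, abs_of_pos hc]
    nlinarith
  -- Key induction: n steps of length γ
  have hA : ∀ n : ℕ, ∀ t, T₀ ≤ t → (∫ s in t..(t + n * γ), (f s - a s * c)) ≤ -(n : ℝ) * μ := by
    intro n
    induction n with
    | zero => intro t _; simp
    | succ n ih =>
      intro t ht
      have ht0 : (0 : ℝ) ≤ t := le_trans hT₀ ht
      have hnγ : (0:ℝ) ≤ (n:ℝ) * γ := mul_nonneg (Nat.cast_nonneg n) hγ.le
      have h1 := ih t ht
      have h2 := hint (t + n * γ) (by linarith)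
      have hadd : (∫ s in t..(t + n * γ), (f s - a s * c))
          + (∫ s in (t + n * γ)..((t + n * γ) + γ), (f s - a s * c))
          = ∫ s in t..((t + n * γ) + γ), (f s - a s * c) :=
        integral_add_adjacent_intervals (hg_int _ _ ht0 (by linarith))
          (hg_int _ _ (by linarith) (by linarith))
      have heqpt : t + ((n : ℕ) + 1 : ℕ) * γ = (t + n * γ) + γ := by push_cast; ring
      rw [heqpt, ← hadd]
      push_cast
      nlinarith
  -- main eventual bound
  set C : ℝ := Real.log (x T) + μ + K * γ - M T with hCdef
  set rhs : ℝ → ℝ := fun t => (C + M t) / t - (μ / γ) * ((t - T) / t) with hrhs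
  have h_ev : ∀ᶠ t in atTop, Real.log (x t) / t ≤ rhs t := by
    filter_upwards [eventually_ge_atTop (max T 1)] with t ht
    have htT : T ≤ t := le_trans (le_max_left _ _) ht
    have ht1 : (1:ℝ) ≤ t := le_trans (le_max_right _ _) ht
    have ht0 : (0:ℝ) < t := lt_of_lt_of_le one_pos ht1
    set n : ℕ := ⌊(t - T) / γ⌋₊ with hn
    have hfrac0 : (0:ℝ) ≤ (t - T) / γ := div_nonneg (by linarith) hγ.le
    have hfl : (n : ℝ) ≤ (t - T) / γ := Nat.floor_le hfrac0
    have hfl' : (t - T) / γ < n + 1 := Nat.lt_floor_add_one _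
    have hnγt : T + n * γ ≤ t := by
      have h := mul_le_mul_of_nonneg_right hfl hγ.le
      rw [div_mul_cancel₀ _ (ne_of_gt hγ)] at h
      linarith
    have htn : t - (T + n * γ) ≤ γ := by
      have h := mul_lt_mul_of_pos_right hfl' hγ
      rw [div_mul_cancel₀ _ (ne_of_gt hγ)] at h
      nlinarith
    have hlog : Real.log (x t) - Real.log (x T)
        = (∫ s in T..t, (f s - a s * x s)) + (M t - M T) := heq T t hT0 htT
    -- compare integrands
    have hmono : (∫ s in T..t, (f s - a s * x s)) ≤ ∫ s in T..t, (f s - a s * c) := by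
      apply integral_mono_on htT (hh_int _ _ hT0 ht0.le) (hg_int _ _ hT0 ht0.le)
      intro s hs
      have hs0 : (0:ℝ) ≤ s := le_trans hT0 hs.1
      have hsc : c ≤ x s := hxc s (le_trans hTT₁ hs.1)
      have := mul_le_mul_of_nonneg_left hsc (ha_nonneg s hs0)
      linarith
    -- split the integral
    have hTn0 : (0:ℝ) ≤ T + n * γ := by positivity
    have hsplit : (∫ s in T..(T + n * γ), (f s - a s * c))
        + (∫ s in (T + n * γ)..t, (f s - a s * c))
        = ∫ s in T..t, (f s - a s * c) :=
      integral_add_adjacent_intervals (hg_int _ _ hT0 hTn0) (hg_int _ _ hTn0 ht0.le)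
    have hpart1 : (∫ s in T..(T + n * γ), (f s - a s * c)) ≤ -(n:ℝ) * μ := hA n T hTT₀
    have hpart2 : (∫ s in (T + n * γ)..t, (f s - a s * c)) ≤ K * γ := by
      have hnorm : ‖∫ s in (T + n * γ)..t, (f s - a s * c)‖ ≤ K * |t - (T + n * γ)| := by
        apply intervalIntegral.norm_integral_le_of_norm_le_const
        intro s hs
        have hs0 : (0:ℝ) ≤ s := by
          rcases Set.mem_uIoc.mp hs with h | h
          · linarith [h.1]
          · linarith [h.1]
        exact hgK s hs0
      have habs : |t - (T + n * γ)| = t - (T + n * γ) := abs_of_nonneg (by linarith)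
      have h1 : (∫ s in (T + n * γ)..t, (f s - a s * c))
          ≤ |∫ s in (T + n * γ)..t, (f s - a s * c)| := le_abs_self _
      rw [Real.norm_eq_abs, habs] at hnorm
      have : K * (t - (T + n * γ)) ≤ K * γ := mul_le_mul_of_nonneg_left htn hK0
      linarith
    have hnμ : -(n:ℝ) * μ ≤ -(μ / γ) * (t - T) + μ := by
      have h := mul_lt_mul_of_pos_right hfl' hμ
      have hdiv : (t - T) / γ * μ = μ / γ * (t - T) := by
        rw [div_mul_eq_mul_div, div_mul_eq_mul_div, mul_comm]
      nlinarith
    have hlogbd : Real.log (x t) ≤ C + M t - (μ / γ) * (t - T) := by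
      have : Real.log (x t) = Real.log (x T)
          + ((∫ s in T..t, (f s - a s * x s)) + (M t - M T)) := by linarith
      rw [this]
      have : (∫ s in T..t, (f s - a s * c)) ≤ -(n:ℝ) * μ + K * γ := by
        rw [← hsplit]; linarith
      simp only [hCdef]
      have h9 : (∫ s in T..t, (f s - a s * x s)) ≤ -(μ / γ) * (t - T) + μ + K * γ := by
        calc (∫ s in T..t, (f s - a s * x s)) ≤ ∫ s in T..t, (f s - a s * c) := hmono
          _ ≤ -(n:ℝ) * μ + K * γ := this
          _ ≤ -(μ / γ) * (t - T) + μ + K * γ := by linarith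
      linarith [h9]
    -- divide by t
    have := div_le_div_of_nonneg_right hlogbd ht0.le
    calc Real.log (x t) / t ≤ (C + M t - (μ / γ) * (t - T)) / t := this
      _ = rhs t := by
        simp only [hrhs]
        rw [sub_div, mul_div_assoc]
  -- the comparison function tends to -(μ/γ)
  have h_tend : Tendsto rhs atTop (nhds (-(μ / γ))) := by
    have h1 : Tendsto (fun t : ℝ => (C + M t) / t) atTop (nhds 0) := by
      have hc1 : Tendsto (fun t : ℝ => C / t) atTop (nhds 0) :=
        Tendsto.div_atTop tendsto_const_nhds tendsto_id
      have := hc1.add hM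
      rw [add_zero] at this
      refine this.congr (fun t => ?_)
      rw [add_div]
    have h2 : Tendsto (fun t : ℝ => (t - T) / t) atTop (nhds 1) := by
      have hc1 : Tendsto (fun t : ℝ => 1 - T / t) atTop (nhds 1) := by
        have : Tendsto (fun t : ℝ => T / t) atTop (nhds 0) :=
          Tendsto.div_atTop tendsto_const_nhds tendsto_id
        have h := (tendsto_const_nhds (x := (1:ℝ)) (f := atTop)).sub this
        rw [sub_zero] at h
        exact h
      refine hc1.congr' ?_
      filter_upwards [eventually_gt_atTop (0:ℝ)] with t ht
      rw [sub_div, div_self (ne_of_gt ht)]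
    have h3 : Tendsto (fun t : ℝ => (μ / γ) * ((t - T) / t)) atTop (nhds (μ / γ)) := by
      have := h2.const_mul (μ / γ)
      rwa [mul_one] at this
    have := h1.sub h3
    rw [zero_sub] at this
    exact this
  -- lower bound for coboundedness
  have h_lb : ∀ᶠ t in atTop, min (Real.log c) 0 ≤ Real.log (x t) / t := by
    filter_upwards [eventually_ge_atTop (max T₁ 1)] with t ht
    have htT₁ : T₁ ≤ t := le_trans (le_max_left _ _) ht
    have ht1 : (1:ℝ) ≤ t := le_trans (le_max_right _ _) ht
    have ht0 : (0:ℝ) < t := lt_of_lt_of_le one_pos ht1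
    have hlc : Real.log c ≤ Real.log (x t) := Real.log_le_log hc (hxc t htT₁)
    have hdiv : Real.log c / t ≤ Real.log (x t) / t := div_le_div_of_nonneg_right hlc ht0.le
    rcases le_or_gt 0 (Real.log c) with h | h
    · have : (0:ℝ) ≤ Real.log c / t := div_nonneg h ht0.le
      exact le_trans (min_le_right _ _) (le_trans this hdiv)
    · refine le_trans (min_le_left _ _) (le_trans ?_ hdiv)
      rw [le_div_iff₀ ht0]
      nlinarith
  have h_cobdd : IsCoboundedUnder (· ≤ ·) atTop (fun t => Real.log (x t) / t) :=
    IsBoundedUnder.isCoboundedUnder_le ⟨min (Real.log c) 0, by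
      simpa [eventually_map] using h_lb⟩
  have h_limsup : limsup (fun t => Real.log (x t) / t) atTop ≤ -μ / γ := by
    have h := Filter.limsup_le_limsup h_ev h_cobdd (h_tend.isBoundedUnder_le)
    rw [h_tend.limsup_eq] at h
    rw [neg_div]
    exact h
  refine ⟨h_limsup, ?_⟩
  -- x → 0
  have hhalf : -(μ / γ) < -(μ / γ) / 2 := by
    have : 0 < μ / γ := div_pos hμ hγ
    linarith
  have h_ev2 : ∀ᶠ t in atTop, rhs t < -(μ / γ) / 2 := h_tend.eventually_lt_const hhalf
  have hlog_bot : Tendsto (fun t => Real.log (x t)) atTop atBot := by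
    apply tendsto_atBot_mono' atTop (f₁ := fun t => (-(μ / γ) / 2) * t)
    · filter_upwards [h_ev, h_ev2, eventually_ge_atTop (1:ℝ)] with t h1 h2 ht1
      have ht0 : (0:ℝ) < t := lt_of_lt_of_le one_pos ht1
      have : Real.log (x t) / t < -(μ / γ) / 2 := lt_of_le_of_lt h1 h2
      have := (div_lt_iff₀ ht0).mp this
      linarith
    · have hneg : -(μ / γ) / 2 < 0 := by
        have : 0 < μ / γ := div_pos hμ hγ
        linarith
      exact Tendsto.const_mul_atTop_of_neg hneg tendsto_id
  have : Tendsto (fun t => Real.exp (Real.log (x t))) atTop (nhds 0) :=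
    Real.tendsto_exp_atBot.comp hlog_bot
  refine this.congr' ?_
  filter_upwards [eventually_ge_atTop (0:ℝ)] with t ht
  exact Real.exp_log (hx_pos t ht)
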